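/- Let n ≥ 1 and let 0 ≤ k < 2^n have binary digits k = a_1·2^{n−1} + a_2·2^{n−2} + ... + a_n with a_i ∈ {0,1}. Then π_{2^n}(k) = b_1·2^{n−1} + b_2·2^{n−2} + ... + b_n, where b_1 = a_1 and, for 2 ≤ i ≤ n, b_i = 0 if a_{i−1} = a_i and b_i = 1 otherwise. -/

import Mathlib

/-- The permutation `π_{p^n}` of `{0, …, p^n − 1}`: `π_{p^1}` is the identity, and for
`a·p^{n−1} ≤ k < (a+1)·p^{n−1}`, `π_{p^n}(k) = a·p^{n−1} + π_{p^{n−1}}(k − a·p^{n−1})`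
if `a` is even, and `π_{p^n}(k) = a·p^{n−1} + π_{p^{n−1}}(p^{n−1} − (k − a·p^{n−1}) − 1)`
if `a` is odd. -/
def piPow (p : ℕ) : ℕ → ℕ → ℕ
  | 0, k => k
  | n + 1, k =>
    if Even (k / p ^ n) then k / p ^ n * p ^ n + piPow p n (k % p ^ n)
    else k / p ^ n * p ^ n + piPow p n (p ^ n - k % p ^ n - 1)

/-- Gray code digits: `gray a 1 = a 1`, `gray a i = if a (i-1) = a i then 0 else 1`. -/
def gray (a : ℕ → ℕ) (i : ℕ) : ℕ :=
  if i = 1 then a 1 else if a (i - 1) = a i then 0 else 1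

lemma gray_one (a : ℕ → ℕ) : gray a 1 = a 1 := by simp [gray]

lemma gray_shift0 (a : ℕ → ℕ) (h1 : a 1 = 0) (ha2 : a 2 < 2) (i : ℕ) (hi : 1 ≤ i) :
    gray (fun j => a (j + 1)) i = gray a (i + 1) := by
  rcases Nat.eq_or_lt_of_le hi with h | h
  · rw [← h]
    show a (1 + 1) = gray a (1 + 1)
    rw [show gray a (1 + 1) = if a 1 = a (1 + 1) then 0 else 1 from rfl, h1]
    have h2 : a (1 + 1) < 2 := by convert ha2 using 2
    split <;> omega
  · unfold gray
    rw [if_neg (by omega : ¬ i = 1), if_neg (by omega : ¬ i + 1 = 1)]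
    beta_reduce
    rw [show i - 1 + 1 = i by omega, show i + 1 - 1 = i from rfl]

lemma gray_shift1 (a : ℕ → ℕ) (h1 : a 1 = 1) (i : ℕ) (hi : 1 ≤ i)
    (hai : a i < 2) (hai1 : a (i + 1) < 2) :
    gray (fun j => 1 - a (j + 1)) i = gray a (i + 1) := by
  rcases Nat.eq_or_lt_of_le hi with h | h
  · rw [← h] at hai1 ⊢
    show 1 - a (1 + 1) = gray a (1 + 1)
    rw [show gray a (1 + 1) = if a 1 = a (1 + 1) then 0 else 1 from rfl, h1]
    split <;> omega
  · unfold gray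
    rw [if_neg (by omega : ¬ i = 1), if_neg (by omega : ¬ i + 1 = 1)]
    beta_reduce
    rw [show i - 1 + 1 = i by omega, show i + 1 - 1 = i from rfl]
    split <;> split <;> omega

lemma sum_shift (n : ℕ) (f : ℕ → ℕ) :
    ∑ i ∈ Finset.Icc 1 (n + 1), f i = f 1 + ∑ i ∈ Finset.Icc 1 n, f (i + 1) := by
  induction n with
  | zero => simp
  | succ n ih =>
      rw [Finset.sum_Icc_succ_top (by omega), ih, Finset.sum_Icc_succ_top (by omega)]
      ring

lemma geom (n : ℕ) : ∑ i ∈ Finset.Icc 1 n, 2 ^ (n - i) = 2 ^ n - 1 := by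
  induction n with
  | zero => simp
  | succ n ih =>
      rw [Finset.sum_Icc_succ_top (by omega)]
      have h : ∑ i ∈ Finset.Icc 1 n, 2 ^ (n + 1 - i) = 2 * (2 ^ n - 1) := by
        rw [← ih, Finset.mul_sum]
        apply Finset.sum_congr rfl
        intro i hi
        simp only [Finset.mem_Icc] at hi
        rw [← pow_succ']
        congr 1
        omega
      have h2 : (1:ℕ) ≤ 2 ^ n := Nat.one_le_two_pow
      simp only [Nat.sub_self, pow_zero] at *
      rw [h, pow_succ]
      omega

lemma aux (n : ℕ) (a : ℕ → ℕ) (ha : ∀ i, 1 ≤ i → i ≤ n → a i < 2) :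
    piPow 2 n (∑ i ∈ Finset.Icc 1 n, a i * 2 ^ (n - i)) =
      ∑ i ∈ Finset.Icc 1 n, gray a i * 2 ^ (n - i) := by
  induction n generalizing a with
  | zero => simp [piPow]
  | succ n ih =>
    have hpos : (0:ℕ) < 2 ^ n := Nat.pow_pos (by norm_num)
    have hmlt : ∀ c : ℕ → ℕ, (∀ i, 1 ≤ i → i ≤ n → c i < 2) →
        ∑ i ∈ Finset.Icc 1 n, c i * 2 ^ (n - i) < 2 ^ n := by
      intro c hc
      have h1 : ∑ i ∈ Finset.Icc 1 n, c i * 2 ^ (n - i)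
          ≤ ∑ i ∈ Finset.Icc 1 n, 1 * 2 ^ (n - i) := by
        apply Finset.sum_le_sum
        intro i hi
        simp only [Finset.mem_Icc] at hi
        exact Nat.mul_le_mul_right _ (by have := hc i hi.1 hi.2; omega)
      simp only [one_mul, geom] at h1
      omega
    set m := ∑ i ∈ Finset.Icc 1 n, a (i + 1) * 2 ^ (n - i) with hm
    have hm2 : m < 2 ^ n := hmlt _ (fun i h1 h2 => ha (i + 1) (by omega) (by omega))
    have hksum : ∑ i ∈ Finset.Icc 1 (n + 1), a i * 2 ^ (n + 1 - i) = a 1 * 2 ^ n + m := by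
      rw [sum_shift]
      congr 1
      apply Finset.sum_congr rfl
      intro i hi
      simp only [Finset.mem_Icc] at hi
      congr 2
      omega
    have hrhs : ∑ i ∈ Finset.Icc 1 (n + 1), gray a i * 2 ^ (n + 1 - i)
        = gray a 1 * 2 ^ n + ∑ i ∈ Finset.Icc 1 n, gray a (i + 1) * 2 ^ (n - i) := by
      rw [sum_shift]
      congr 1
      apply Finset.sum_congr rfl
      intro i hi
      simp only [Finset.mem_Icc] at hi
      congr 2
      omega
    rw [hksum, hrhs, gray_one]
    have ha1 : a 1 = 0 ∨ a 1 = 1 := by have := ha 1 (by omega) (by omega); omega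
    rcases ha1 with h1 | h1
    · -- a 1 = 0
      rw [h1]
      simp only [zero_mul, zero_add]
      have hdiv : m / 2 ^ n = 0 := Nat.div_eq_of_lt hm2
      have hmod : m % 2 ^ n = m := Nat.mod_eq_of_lt hm2
      rw [show piPow 2 (n+1) m = if Even (m / 2 ^ n) then m / 2 ^ n * 2 ^ n + piPow 2 n (m % 2 ^ n)
        else m / 2 ^ n * 2 ^ n + piPow 2 n (2 ^ n - m % 2 ^ n - 1) from rfl,
        hdiv, hmod]
      simp only [Even.zero, if_true, zero_mul, zero_add]
      rw [ih (fun i => a (i + 1)) (fun i hi1 hi2 => ha (i + 1) (by omega) (by omega))]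
      apply Finset.sum_congr rfl
      intro i hi
      simp only [Finset.mem_Icc] at hi
      rw [gray_shift0 a h1 (ha 2 (by omega) (by omega)) i hi.1]
    · -- a 1 = 1
      rw [h1]
      simp only [one_mul]
      have hdiv : (2 ^ n + m) / 2 ^ n = 1 := by
        rw [add_comm, Nat.add_div_right _ hpos, Nat.div_eq_of_lt hm2]
      have hmod : (2 ^ n + m) % 2 ^ n = m := by
        rw [Nat.add_mod_left, Nat.mod_eq_of_lt hm2]
      have hcomp : 2 ^ n - m - 1 = ∑ i ∈ Finset.Icc 1 n, (1 - a (i + 1)) * 2 ^ (n - i) := by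
        have hs : ∑ i ∈ Finset.Icc 1 n, (1 - a (i + 1)) * 2 ^ (n - i) + m = 2 ^ n - 1 := by
          rw [hm, ← Finset.sum_add_distrib, ← geom n]
          apply Finset.sum_congr rfl
          intro i hi
          simp only [Finset.mem_Icc] at hi
          rw [← add_mul]
          have h2 : a (i + 1) < 2 := ha (i + 1) (by omega) (by omega)
          rw [show 1 - a (i + 1) + a (i + 1) = 1 by omega, one_mul]
        omega
      rw [show piPow 2 (n+1) (2 ^ n + m) = if Even ((2 ^ n + m) / 2 ^ n) then
          (2 ^ n + m) / 2 ^ n * 2 ^ n + piPow 2 n ((2 ^ n + m) % 2 ^ n)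
        else (2 ^ n + m) / 2 ^ n * 2 ^ n + piPow 2 n (2 ^ n - (2 ^ n + m) % 2 ^ n - 1) from rfl,
        hdiv, hmod]
      simp only [Nat.not_even_one, if_false, one_mul]
      rw [hcomp, ih (fun i => 1 - a (i + 1)) (fun i hi1 hi2 => by
        show 1 - a (i + 1) < 2
        have := ha (i + 1) (by omega) (by omega); omega)]
      congr 1
      apply Finset.sum_congr rfl
      intro i hi
      simp only [Finset.mem_Icc] at hi
      rw [gray_shift1 a h1 i hi.1 (ha i (by omega) (by omega)) (ha (i + 1) (by omega) (by omega))]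

/-- Binary description of `π_{2^n}`: if `k = a_1·2^{n−1} + ⋯ + a_n` with digits
`a_i ∈ {0,1}`, then `π_{2^n}(k) = b_1·2^{n−1} + ⋯ + b_n` where `b_1 = a_1` and, for
`2 ≤ i ≤ n`, `b_i = 0` if `a_{i−1} = a_i` and `b_i = 1` otherwise. -/
theorem piPow_two_binary (n : ℕ) (hn : 1 ≤ n)
    (a b : ℕ → ℕ) (ha : ∀ i, 1 ≤ i → i ≤ n → a i < 2)
    (k : ℕ) (hk : k = ∑ i ∈ Finset.Icc 1 n, a i * 2 ^ (n - i))
    (hb1 : b 1 = a 1)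
    (hb : ∀ i, 2 ≤ i → i ≤ n → b i = if a (i - 1) = a i then 0 else 1) :
    piPow 2 n k = ∑ i ∈ Finset.Icc 1 n, b i * 2 ^ (n - i) := by
  rw [hk, aux n a ha]
  apply Finset.sum_congr rfl
  intro i hi
  simp only [Finset.mem_Icc] at hi
  congr 1
  rcases Nat.eq_or_lt_of_le hi.1 with h | h
  · rw [← h, gray_one, hb1]
  · rw [hb i (by omega) hi.2]
    unfold gray
    rw [if_neg (by omega : ¬ i = 1)]
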